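/- For every partially ordered set P there exist a lattice L and an injective map e : P → L such that e is an order embedding (a ≤ b in P if and only if e a ≤ e b in L), and for all a, b, c ∈ P: c is the least upper bound of {a, b} in P if and only if e a ⊔ e b = e c, and c is the greatest lower bound of {a, b} in P if and only if e a ⊓ e b = e c. (That is, the partial algebra on P given by the partially defined operations a ∨ b := sup(a,b) and a ∧ b := inf(a,b), whenever these exist, is a partial lattice: it is a relative subalgebra of a lattice.) -/

import Mathlib

open Set

section aux
variable {P : Type} [PartialOrder P]

lemma myIntent (a : P) : upperPolar (· ≤ ·) (Iic a) = Ici a := by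
  ext b
  constructor
  · intro h; exact h (le_refl a)
  · intro h x hx; exact le_trans hx h

lemma myExtent (a : P) : lowerPolar (· ≤ ·) (Ici a) = Iic a := by
  ext b
  constructor
  · intro h; exact h (le_refl a)
  · intro h x hx; exact le_trans h hx

lemma intent_eq_ub (s : Set P) : upperPolar (· ≤ ·) s = upperBounds s := rfl
lemma extent_eq_lb (s : Set P) : lowerPolar (· ≤ ·) s = lowerBounds s := rfl

/-- the principal concept -/
def pc (a : P) : Concept P P (· ≤ ·) :=
  ⟨Iic a, Ici a, myIntent a, myExtent a⟩

lemma lub_iff (a b c : P) :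
    IsLUB ({a, b} : Set P) c ↔ lowerBounds (upperBounds ({a, b} : Set P)) = Iic c := by
  constructor
  · intro h
    ext x
    constructor
    · intro hx; exact hx h.1
    · intro hx y hy; exact le_trans hx (h.2 hy)
  · intro h
    constructor
    · intro x hx
      have ha : a ∈ lowerBounds (upperBounds ({a, b} : Set P)) :=
        fun y hy => hy (by simp)
      have hb : b ∈ lowerBounds (upperBounds ({a, b} : Set P)) :=
        fun y hy => hy (by simp)
      rw [h] at ha hb
      rcases hx with rfl | hx
      · exact ha
      · simp_all
    · intro y hy
      have : c ∈ lowerBounds (upperBounds ({a, b} : Set P)) := by rw [h]; exact le_refl c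
      exact this hy

lemma glb_iff (a b c : P) :
    IsGLB ({a, b} : Set P) c ↔ lowerBounds ({a, b} : Set P) = Iic c := by
  constructor
  · intro h
    ext x
    constructor
    · intro hx; exact h.2 hx
    · intro hx y hy; exact le_trans hx (h.1 hy)
  · intro h
    constructor
    · have : c ∈ Iic c := le_refl c
      rw [← h] at this; exact this
    · intro x hx; rw [h] at hx; exact hx

end aux

/-- Every partially ordered set, with the partial operations `a ∨ b := sup(a,b)` and
`a ∧ b := inf(a,b)` (defined whenever the sup/inf exists), is a partial lattice:
it embeds as a relative subalgebra into a lattice. -/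
theorem poset_is_partial_lattice (P : Type) [PartialOrder P] :
    ∃ (L : Type) (_ : Lattice L) (e : P → L),
      Function.Injective e ∧
      (∀ a b : P, a ≤ b ↔ e a ≤ e b) ∧
      (∀ a b c : P, IsLUB ({a, b} : Set P) c ↔ e a ⊔ e b = e c) ∧
      (∀ a b c : P, IsGLB ({a, b} : Set P) c ↔ e a ⊓ e b = e c) := by
  refine ⟨Concept P P (· ≤ ·), inferInstance, pc, ?_, ?_, ?_, ?_⟩
  · intro a b h
    have : (pc a).extent = (pc b).extent := congrArg (fun x => x.extent) h
    simpa [pc, Iic_inj] using this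
  · intro a b
    constructor
    · intro h
      show (pc a).extent ⊆ (pc b).extent
      exact Iic_subset_Iic.2 h
    · intro h
      exact Iic_subset_Iic.1 h
  · intro a b c
    have hub : (pc a).intent ∩ (pc b).intent = upperBounds ({a, b} : Set P) := by
      simp [pc, upperBounds_insert, upperBounds_singleton]
    constructor
    · intro h
      apply Concept.ext
      show lowerPolar (· ≤ ·) ((pc a).intent ∩ (pc b).intent) = Iic c
      rw [hub, extent_eq_lb, ← (lub_iff a b c).1 h]
    · intro h
      have : lowerPolar (· ≤ ·) ((pc a).intent ∩ (pc b).intent) = Iic c :=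
        congrArg (fun x => x.extent) h
      rw [hub, extent_eq_lb] at this
      exact (lub_iff a b c).2 this
  · intro a b c
    have hlb : (pc a).extent ∩ (pc b).extent = lowerBounds ({a, b} : Set P) := by
      simp [pc, lowerBounds_insert, lowerBounds_singleton]
    constructor
    · intro h
      apply Concept.ext
      show (pc a).extent ∩ (pc b).extent = Iic c
      rw [hlb, ← (glb_iff a b c).1 h]
    · intro h
      have : (pc a).extent ∩ (pc b).extent = Iic c := congrArg (fun x => x.extent) h
      rw [hlb] at this
      exact (glb_iff a b c).2 this
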